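/- Let X : [0,1] → ℝ^{N×M} be a differentiable solution of the BGR09 perturbation equation dX/ds = − (1/(2(M−1))) · X Xᵀ Hᵀ R⁻¹ H X with X(0)·1 = 0. Then X(s)·1 = 0 for all s ∈ [0,1]; that is, the ensemble perturbations remain mean-zero along the Kalman–Bucy flow. -/

import Mathlib

open Matrix

attribute [local instance] Matrix.normedAddCommGroup Matrix.normedSpace

/-- If `X : [0,1] → ℝ^{N×M}` is a differentiable solution of the BGR09 perturbation
equation `dX/ds = −(1/(2(M−1))) X Xᵀ Hᵀ R⁻¹ H X` with `X(0)·1 = 0`, then `X(s)·1 = 0`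
for all `s ∈ [0,1]`: the ensemble perturbations remain mean-zero along the flow. -/
theorem stmt_9 {N L M : ℕ} (hM : 2 ≤ M)
    (H : Matrix (Fin L) (Fin N) ℝ) (R : Matrix (Fin L) (Fin L) ℝ) (hR : R.PosDef)
    (one : Fin M → ℝ) (hone : one = fun _ => 1)
    (X : ℝ → Matrix (Fin N) (Fin M) ℝ)
    (hX : ∀ s ∈ Set.Icc (0:ℝ) 1,
      HasDerivWithinAt X
        (-(1 / (2 * ((M : ℝ) - 1))) • (X s * (X s)ᵀ * Hᵀ * R⁻¹ * H * X s))
        (Set.Icc 0 1) s)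
    (h0 : X 0 *ᵥ one = 0) :
    ∀ s ∈ Set.Icc (0:ℝ) 1, X s *ᵥ one = 0 := by
  classical
  set c : ℝ := -(1 / (2 * ((M : ℝ) - 1))) with hc
  -- the coefficient matrix
  set A : ℝ → Matrix (Fin N) (Fin N) ℝ :=
    fun t => c • (X t * (X t)ᵀ * Hᵀ * R⁻¹ * H) with hA
  -- the linear map "multiply by one"
  let φ : Matrix (Fin N) (Fin M) ℝ →L[ℝ] (Fin N → ℝ) :=
    LinearMap.toContinuousLinearMap
      { toFun := fun B => B *ᵥ one
        map_add' := fun B C => Matrix.add_mulVec B C one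
        map_smul' := fun r B => by
          simp [Matrix.smul_mulVec] }
  set y : ℝ → (Fin N → ℝ) := fun t => X t *ᵥ one with hy
  have hφ : ∀ B, φ B = B *ᵥ one := fun B => rfl
  -- continuity of X on Icc
  have hXcont : ContinuousOn X (Set.Icc (0:ℝ) 1) :=
    fun t ht => (hX t ht).continuousWithinAt
  have hAcont : ContinuousOn A (Set.Icc (0:ℝ) 1) := by
    have hF : Continuous fun B : Matrix (Fin N) (Fin M) ℝ =>
        c • (B * Bᵀ * Hᵀ * R⁻¹ * H) :=
      (((((continuous_id.matrix_mul continuous_id.matrix_transpose).matrix_mul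
        continuous_const).matrix_mul continuous_const).matrix_mul
        continuous_const).const_smul c)
    exact hF.comp_continuousOn hXcont
  -- the norm of the induced CLM, continuous in t
  let Ψ : Matrix (Fin N) (Fin N) ℝ →ₗ[ℝ] ((Fin N → ℝ) →L[ℝ] (Fin N → ℝ)) :=
    { toFun := fun B => LinearMap.toContinuousLinearMap B.mulVecLin
      map_add' := fun B C => by
        apply ContinuousLinearMap.ext; intro v
        simp [Matrix.add_mulVec]
      map_smul' := fun r B => by
        apply ContinuousLinearMap.ext; intro v
        simp [Matrix.smul_mulVec] }
  have hΨcont : Continuous Ψ := Ψ.continuous_of_finiteDimensional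
  have hnormcont : ContinuousOn (fun t => ‖Ψ (A t)‖) (Set.Icc (0:ℝ) 1) :=
    (hΨcont.comp_continuousOn hAcont).norm
  -- get a uniform bound K
  obtain ⟨t₀, -, ht₀⟩ := (isCompact_Icc (a := (0:ℝ)) (b := 1)).exists_isMaxOn
    (Set.nonempty_Icc.2 zero_le_one) hnormcont
  set K : NNReal := ‖Ψ (A t₀)‖₊ with hK
  -- clamp time into [0,1]
  set B : ℝ → Matrix (Fin N) (Fin N) ℝ := fun t => A (min (max t 0) 1) with hB
  have hclamp : ∀ t ∈ Set.Icc (0:ℝ) 1, B t = A t := by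
    intro t ht
    simp only [hB, max_eq_left ht.1, min_eq_left ht.2]
  have hmemclamp : ∀ t : ℝ, min (max t 0) 1 ∈ Set.Icc (0:ℝ) 1 :=
    fun t => ⟨le_min (le_max_right t 0) zero_le_one, min_le_right _ _⟩
  have hLip : ∀ t : ℝ, LipschitzOnWith K (fun z => B t *ᵥ z) Set.univ := by
    intro t
    have h1 : LipschitzWith ‖Ψ (B t)‖₊ (Ψ (B t)) := (Ψ (B t)).lipschitz
    have h2 : LipschitzWith K (Ψ (B t)) := by
      apply h1.weaken
      have := ht₀ (hmemclamp t)
      exact_mod_cast this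
    have h3 : (fun z => B t *ᵥ z) = Ψ (B t) := rfl
    rw [h3]
    exact h2.lipschitzOnWith
  -- y solves the linear ODE
  have hy' : ∀ t ∈ Set.Ico (0:ℝ) 1, HasDerivWithinAt y (B t *ᵥ y t) (Set.Ici t) t := by
    intro t ht
    rw [hclamp t (Set.Ico_subset_Icc_self ht)]
    have hder := hX t (Set.Ico_subset_Icc_self ht)
    have hmem : Set.Icc (0:ℝ) 1 ∈ nhdsWithin t (Set.Ici t) := by
      rw [mem_nhdsWithin]
      exact ⟨Set.Iio 1, isOpen_Iio, ht.2, fun z hz => ⟨le_trans ht.1 hz.2, le_of_lt hz.1⟩⟩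
    have hder' : HasDerivWithinAt X (c • (X t * (X t)ᵀ * Hᵀ * R⁻¹ * H * X t)) (Set.Ici t) t :=
      hder.mono_of_mem_nhdsWithin hmem
    have := φ.hasFDerivAt.comp_hasDerivWithinAt t hder'
    have heq : φ (c • (X t * (X t)ᵀ * Hᵀ * R⁻¹ * H * X t)) = A t *ᵥ y t := by
      rw [hφ, hy, hA]
      rw [Matrix.smul_mulVec, Matrix.smul_mulVec]
      congr 1
      rw [← Matrix.mulVec_mulVec]
    rw [← heq]
    exact this
  have hycont : ContinuousOn y (Set.Icc (0:ℝ) 1) :=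
    φ.continuous.comp_continuousOn hXcont
  -- zero is also a solution
  have h0' : ∀ t ∈ Set.Ico (0:ℝ) 1,
      HasDerivWithinAt (fun _ : ℝ => (0 : Fin N → ℝ)) (B t *ᵥ (0 : Fin N → ℝ)) (Set.Ici t) t := by
    intro t ht
    rw [Matrix.mulVec_zero]
    exact hasDerivWithinAt_const t _ 0
  have := ODE_solution_unique_of_mem_Icc_right (v := fun t z => B t *ᵥ z)
    (s := fun _ => Set.univ) (fun t _ => hLip t) hycont hy' (fun _ _ => Set.mem_univ _)
    continuousOn_const h0' (fun _ _ => Set.mem_univ _) h0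
  intro s hs
  exact this hs
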